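/- If (x, n, B, k) is a prefix polymorphism, then x = ⌊(B^k · n)^(1/n)⌋ + 1. -/
import Mathlib


/-- A quadruple `(x, n, B, k)` of positive integers with `B ≥ 2` is a *prefix
polymorphism* if `x^n = B^k·n + x` and `B^(k-1) ≤ x < B^k` (i.e. `x` has exactly
`k` digits in base `B`). -/
def IsPrefixPolymorphism (x n B k : ℕ) : Prop :=
  0 < x ∧ 0 < n ∧ 2 ≤ B ∧ 0 < k ∧
    x ^ n = B ^ k * n + x ∧ B ^ (k - 1) ≤ x ∧ x < B ^ k

/-- If `(x, n, B, k)` is a prefix polymorphism, then `x = ⌊(B^k·n)^(1/n)⌋ + 1`. -/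
theorem prefix_polymorphism_floor_formula (x n B k : ℕ)
    (h : IsPrefixPolymorphism x n B k) :
    (x : ℤ) = ⌊(((B : ℝ) ^ k * n) ^ ((1 : ℝ) / n))⌋ + 1 := by
  obtain ⟨hx, hn, hB, hk, heq, _, _⟩ := h
  have hB0 : 0 < B ^ k := pow_pos (by omega) k
  have hn2 : 2 ≤ n := by
    by_contra h2
    have : n = 1 := by omega
    subst this
    simp at heq
    omega
  -- key combinatorial inequality: (x-1)^n + x ≤ x^n
  have key1 : (x - 1) ^ n + x ≤ x ^ n := by
    obtain ⟨m, rfl⟩ : ∃ m, n = m + 1 := ⟨n - 1, by omega⟩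
    have hm : m ≠ 0 := by omega
    calc (x - 1) ^ (m + 1) + x = (x - 1) * (x - 1) ^ m + x := by ring
      _ ≤ (x - 1) * x ^ m + x ^ m := by
          have h1 : (x - 1) ^ m ≤ x ^ m := Nat.pow_le_pow_left (by omega) m
          have h2 : x ≤ x ^ m := Nat.le_self_pow hm x
          have h3 : (x - 1) * (x - 1) ^ m ≤ (x - 1) * x ^ m :=
            Nat.mul_le_mul_left _ h1
          omega
      _ = ((x - 1) + 1) * x ^ m := by ring
      _ = x ^ (m + 1) := by
          have : x - 1 + 1 = x := by omega
          rw [this]; ring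
  have hlo : (x - 1) ^ n ≤ B ^ k * n := by omega
  have hhi : B ^ k * n < x ^ n := by omega
  set z : ℝ := (B : ℝ) ^ k * n with hzdef
  have hzcast : z = ((B ^ k * n : ℕ) : ℝ) := by push_cast; ring
  have hz : 0 ≤ z := by positivity
  set y : ℝ := z ^ ((1 : ℝ) / n) with hydef
  have hy0 : 0 ≤ y := Real.rpow_nonneg hz _
  have hyn : y ^ n = z := by
    rw [hydef, one_div]
    exact Real.rpow_inv_natCast_pow hz (by omega)
  have hfloor : ⌊y⌋ = (x : ℤ) - 1 := by
    rw [Int.floor_eq_iff]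
    constructor
    · push_cast
      apply le_of_pow_le_pow_left₀ (by omega : n ≠ 0) hy0
      rw [hyn, hzcast]
      have : ((x : ℝ) - 1) = ((x - 1 : ℕ) : ℝ) := by
        have : (1 : ℕ) ≤ x := hx
        push_cast [this]
        ring
      rw [this]
      exact_mod_cast hlo
    · push_cast
      have : y < (x : ℝ) := by
        apply lt_of_pow_lt_pow_left₀ n (by positivity)
        rw [hyn, hzcast]
        exact_mod_cast hhi
      linarith
  rw [hfloor]
  ring
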